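/- For the zero-temperature total QFI with squeezed-vacuum probes, 𝓘(M) = 4𝒩_S[(1-η²)² + η⁴] / ((1-η²)[1 + 2(𝒩_S/M)η²(1-η²)]), one has 𝓘(M) > 4𝒩_S (the coherent-state total QFI) if and only if 𝒩_S/M < (2η²-1)/(2(1-η²)²); in particular no finite or infinite M admits an advantage unless η > 1/√2. -/
import Mathlib


noncomputable def Itotsq (η 𝒩 M : ℝ) : ℝ :=
  4*𝒩*((1-η^2)^2 + η^4) / ((1-η^2)*(1 + 2*(𝒩/M)*η^2*(1-η^2)))

theorem squeezed_vacuum_total_advantage (η 𝒩 : ℝ) (hη0 : 0 < η) (hη1 : η < 1)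
    (h𝒩 : 0 < 𝒩) :
    (∀ M : ℝ, 0 < M →
      (Itotsq η 𝒩 M > 4*𝒩 ↔ 𝒩/M < (2*η^2 - 1)/(2*(1-η^2)^2))) ∧
    ((∃ M : ℝ, 0 < M ∧ Itotsq η 𝒩 M > 4*𝒩) → η > 1/Real.sqrt 2) := by
  have hx : 0 < 1 - η^2 := by nlinarith
  have key : ∀ M : ℝ, 0 < M →
      (Itotsq η 𝒩 M > 4*𝒩 ↔ 𝒩/M < (2*η^2 - 1)/(2*(1-η^2)^2)) := by
    intro M hM
    have hr : 0 < 𝒩/M := div_pos h𝒩 hM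
    have hD : 0 < (1-η^2)*(1 + 2*(𝒩/M)*η^2*(1-η^2)) := by
      have := mul_pos hr (mul_pos (pow_pos hη0 2) hx)
      nlinarith
    have h2 : 0 < 2*(1-η^2)^2 := by positivity
    unfold Itotsq
    rw [gt_iff_lt, lt_div_iff₀ hD, lt_div_iff₀ h2]
    constructor
    · intro h
      nlinarith [mul_pos h𝒩 (pow_pos hη0 2), pow_pos hη0 2]
    · intro h
      nlinarith [mul_pos h𝒩 (pow_pos hη0 2), pow_pos hη0 2]
  refine ⟨key, ?_⟩
  rintro ⟨M, hM, hadv⟩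
  have hlt := (key M hM).1 hadv
  have hr : 0 < 𝒩/M := div_pos h𝒩 hM
  have hpos : 0 < (2*η^2 - 1)/(2*(1-η^2)^2) := lt_trans hr hlt
  have hnum : 0 < 2*η^2 - 1 := by
    by_contra hc
    push_neg at hc
    have : (2*η^2 - 1)/(2*(1-η^2)^2) ≤ 0 := div_nonpos_of_nonpos_of_nonneg hc (by positivity)
    linarith
  have hs2 : (0:ℝ) < Real.sqrt 2 := by positivity
  by_contra hc
  push_neg at hc
  have hη2 : η^2 ≤ (1/Real.sqrt 2)^2 :=
    pow_le_pow_left₀ hη0.le hc 2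
  have : (1/Real.sqrt 2)^2 = 1/2 := by
    rw [div_pow, one_pow, Real.sq_sqrt (by norm_num : (2:ℝ) ≥ 0)]
  linarith [this ▸ hη2]
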